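/- arXiv:1203.6201 — 9 statements merged into one kernel-verified Lean document; each statement's English description precedes it below -/
import Mathlib

section
/- Let r ≥ 1 and let n₁, …, n_r be positive integers. The number of cyclic subgroups of the direct product C_{n₁} × ⋯ × C_{n_r} of cyclic groups equals the sum, over all r-tuples (d₁, …, d_r) with d_i dividing n_i for each i, of φ(d₁)⋯φ(d_r)/φ(lcm(d₁, …, d_r)), where φ is Euler's totient function. (Each summand is an integer-valued rational; the identity holds in ℚ.) -/
open Finset
open scoped Classical

lemma addOrderOf_pi {ι : Type*} [Fintype ι] {M : ι → Type*} [∀ i, AddGroup (M i)]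
    (x : ∀ i, M i) : addOrderOf x = univ.lcm fun i => addOrderOf (x i) := by
  apply Nat.dvd_antisymm
  · apply addOrderOf_dvd_of_nsmul_eq_zero
    funext i
    have h : addOrderOf (x i) ∣ univ.lcm fun i => addOrderOf (x i) :=
      Finset.dvd_lcm (mem_univ i)
    have := addOrderOf_dvd_iff_nsmul_eq_zero.mp h
    simpa using this
  · apply Finset.lcm_dvd
    intro i _
    apply addOrderOf_dvd_of_nsmul_eq_zero
    have : (addOrderOf x • x) i = 0 := by rw [addOrderOf_nsmul_eq_zero]; rfl
    simpa using this

lemma isAddCyclic_zmultiples {G : Type*} [AddGroup G] (a : G) :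
    IsAddCyclic (AddSubgroup.zmultiples a) := by
  constructor
  refine ⟨⟨a, AddSubgroup.mem_zmultiples a⟩, ?_⟩
  rintro ⟨x, hx⟩
  obtain ⟨k, rfl⟩ := hx
  exact ⟨k, by ext; simp⟩

lemma card_generators {G : Type*} [AddGroup G] [Fintype G]
    (H : AddSubgroup G) (hH : IsAddCyclic H) :
    (univ.filter fun x : G => AddSubgroup.zmultiples x = H).card
      = (Nat.card H).totient := by
  haveI := hH
  have hcard : Nat.card H = Fintype.card H := Nat.card_eq_fintype_card
  have key : ∀ x : G, AddSubgroup.zmultiples x = H ↔ x ∈ H ∧ addOrderOf x = Nat.card H := by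
    intro x
    constructor
    · rintro rfl
      exact ⟨AddSubgroup.mem_zmultiples x, (Nat.card_zmultiples x).symm⟩
    · rintro ⟨hx, hord⟩
      refine AddSubgroup.eq_of_le_of_card_ge (AddSubgroup.zmultiples_le.mpr hx) ?_
      rw [Nat.card_zmultiples, hord]
  have h2 : (univ.filter fun x : G => AddSubgroup.zmultiples x = H).card
      = (univ.filter fun y : H => addOrderOf y = Nat.card H).card := by
    refine (Finset.card_bij (fun (y : H) (_ : y ∈ univ.filter
        fun y : H => addOrderOf y = Nat.card H) => (y : G)) ?_ ?_ ?_).symm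
    · intro y hy
      simp only [mem_filter, mem_univ, true_and] at hy ⊢
      rw [key]
      exact ⟨y.2, by rw [AddSubgroup.addOrderOf_coe]; exact hy⟩
    · intro y _ z _ h
      exact Subtype.ext h
    · intro x hx
      simp only [mem_filter, mem_univ, true_and, key] at hx
      exact ⟨⟨x, hx.1⟩, by simp [AddSubgroup.addOrderOf_coe, hx.2], rfl⟩
  rw [h2, hcard]
  exact IsAddCyclic.card_addOrderOf_eq_totient dvd_rfl

lemma card_cyclic_subgroups_eq_sum (G : Type*) [AddGroup G] [Fintype G] :
    (Nat.card {H : AddSubgroup G // IsAddCyclic H} : ℚ)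
      = ∑ x : G, 1 / ((addOrderOf x).totient : ℚ) := by
  haveI : Fintype (AddSubgroup G) := Fintype.ofFinite _
  rw [Nat.card_eq_fintype_card, Fintype.card_subtype]
  rw [← Finset.sum_fiberwise_of_maps_to
    (g := fun x : G => AddSubgroup.zmultiples x)
    (t := univ.filter fun H : AddSubgroup G => IsAddCyclic H)
    (fun x _ => by simp [isAddCyclic_zmultiples x])
    (fun x => 1 / ((addOrderOf x).totient : ℚ))]
  rw [Finset.card_eq_sum_ones, Nat.cast_sum]
  refine Finset.sum_congr rfl fun H hH => ?_
  simp only [mem_filter, mem_univ, true_and] at hH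
  have hfib : ∀ x ∈ univ.filter fun x : G => AddSubgroup.zmultiples x = H,
      (1 / ((addOrderOf x).totient : ℚ)) = 1 / ((Nat.card H).totient : ℚ) := by
    intro x hx
    simp only [mem_filter, mem_univ, true_and] at hx
    rw [← hx, Nat.card_zmultiples]
  rw [Finset.sum_congr rfl hfib, Finset.sum_const, card_generators H hH,
    nsmul_eq_mul, mul_one_div, div_self, Nat.cast_one]
  have hpos : 0 < Nat.card H := Nat.card_pos
  exact_mod_cast (Nat.totient_pos.mpr hpos).ne'

theorem number_of_cyclic_subgroups (r : ℕ) (hr : 1 ≤ r) (n : Fin r → ℕ)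
    (hn : ∀ i, 0 < n i) :
    (Nat.card {H : AddSubgroup (∀ i, ZMod (n i)) // IsAddCyclic H} : ℚ) =
      ∑ d ∈ Fintype.piFinset (fun i => (n i).divisors),
        (∏ i, (Nat.totient (d i) : ℚ)) / (Nat.totient (Finset.univ.lcm d) : ℚ) := by
  haveI : ∀ i, NeZero (n i) := fun i => ⟨(hn i).ne'⟩
  rw [card_cyclic_subgroups_eq_sum]
  rw [← Finset.sum_fiberwise_of_maps_to
    (g := fun (x : ∀ i, ZMod (n i)) (i : Fin r) => addOrderOf (x i))
    (t := Fintype.piFinset fun i => (n i).divisors)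
    (fun x _ => by
      simp only [Fintype.mem_piFinset, Nat.mem_divisors]
      intro i
      refine ⟨?_, (hn i).ne'⟩
      have := addOrderOf_dvd_card (x := x i)
      rwa [ZMod.card] at this)
    (fun x => 1 / ((addOrderOf x).totient : ℚ))]
  refine Finset.sum_congr rfl fun d hd => ?_
  simp only [Fintype.mem_piFinset, Nat.mem_divisors] at hd
  have hfib : ∀ x ∈ univ.filter fun x : ∀ i, ZMod (n i) =>
      (fun i => addOrderOf (x i)) = d,
      (1 / ((addOrderOf x).totient : ℚ)) = 1 / ((univ.lcm d).totient : ℚ) := by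
    intro x hx
    simp only [mem_filter, mem_univ, true_and] at hx
    rw [addOrderOf_pi, hx]
  rw [Finset.sum_congr rfl hfib, Finset.sum_const]
  have hcard : (univ.filter fun x : ∀ i, ZMod (n i) =>
      (fun i => addOrderOf (x i)) = d).card = ∏ i, (d i).totient := by
    have heq : (univ.filter fun x : ∀ i, ZMod (n i) => (fun i => addOrderOf (x i)) = d)
        = Fintype.piFinset fun i => univ.filter fun a : ZMod (n i) => addOrderOf a = d i := by
      ext x
      simp [Fintype.mem_piFinset, funext_iff]
    rw [heq, Fintype.card_piFinset]
    refine Finset.prod_congr rfl fun i _ => ?_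
    have : d i ∣ Fintype.card (ZMod (n i)) := by rw [ZMod.card]; exact (hd i).1
    exact IsAddCyclic.card_addOrderOf_eq_totient this
  rw [hcard, nsmul_eq_mul, mul_one_div, Nat.cast_prod]
end

section
/- Let n₁, n₂ be positive integers. The number of cyclic subgroups of C_{n₁} × C_{n₂} equals the sum, over all pairs (d₁, d₂) with d₁ ∣ n₁ and d₂ ∣ n₂, of φ(gcd(d₁, d₂)). -/
open Finset

section Aux

variable {G : Type*} [AddGroup G]

lemma aux_isAddCyclic_zmultiples [Finite G] (g : G) :
    IsAddCyclic (AddSubgroup.zmultiples g) := by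
  apply isAddCyclic_of_addOrderOf_eq_card
    (⟨g, AddSubgroup.mem_zmultiples g⟩ : AddSubgroup.zmultiples g)
  rw [AddSubgroup.addOrderOf_mk, Nat.card_zmultiples]

lemma aux_exists_zmultiples {H : AddSubgroup G} (hH : IsAddCyclic H) :
    ∃ g : G, AddSubgroup.zmultiples g = H := by
  obtain ⟨⟨g, hg⟩, hgen⟩ := hH.exists_generator
  refine ⟨g, le_antisymm (AddSubgroup.zmultiples_le_of_mem hg) ?_⟩
  intro x hx
  obtain ⟨k, hk⟩ := hgen ⟨x, hx⟩
  exact ⟨k, congrArg Subtype.val hk⟩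

lemma aux_fiber_card [Fintype G] {H : AddSubgroup G} (hH : IsAddCyclic H) {d : ℕ}
    (hd : Nat.card H = d)
    [inst : DecidablePred fun g : G => addOrderOf g = d ∧ AddSubgroup.zmultiples g = H] :
    (univ.filter fun g : G => addOrderOf g = d ∧ AddSubgroup.zmultiples g = H).card
      = Nat.totient d := by
  classical
  have hset : ∀ g : G, (addOrderOf g = d ∧ AddSubgroup.zmultiples g = H) ↔
      (g ∈ H ∧ addOrderOf g = d) := by
    intro g
    constructor
    · rintro ⟨hh1, hh2⟩; exact ⟨hh2 ▸ AddSubgroup.mem_zmultiples g, hh1⟩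
    · rintro ⟨hh1, hh2⟩
      refine ⟨hh2, AddSubgroup.eq_of_le_of_card_ge
        (AddSubgroup.zmultiples_le_of_mem hh1) ?_⟩
      rw [Nat.card_zmultiples, hd, hh2]
  have hfe : (univ.filter fun g : G => addOrderOf g = d ∧ AddSubgroup.zmultiples g = H)
      = univ.filter (fun g : G => g ∈ H ∧ addOrderOf g = d) := by
    ext g; simp only [mem_filter, mem_univ, true_and]; exact hset g
  rw [hfe]
  haveI : Fintype H := Fintype.ofFinite H
  have hdvd : d ∣ Fintype.card H := by
    rw [← Nat.card_eq_fintype_card, hd]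
  calc (univ.filter fun g : G => g ∈ H ∧ addOrderOf g = d).card
      = Fintype.card {g : G // g ∈ H ∧ addOrderOf g = d} := (Fintype.card_subtype _).symm
    _ = Fintype.card {a : H // addOrderOf (a : G) = d} :=
        Fintype.card_congr (Equiv.subtypeSubtypeEquivSubtypeInter _ _).symm
    _ = Fintype.card {a : H // addOrderOf a = d} := by
        apply Fintype.card_congr
        apply Equiv.subtypeEquivRight
        intro a
        rw [AddSubgroup.addOrderOf_coe]
    _ = (univ.filter fun a : H => addOrderOf a = d).card := Fintype.card_subtype _
    _ = Nat.totient d := by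
        have := IsAddCyclic.card_addOrderOf_eq_totient (α := H) (d := d) hdvd
        simpa using this

end Aux

lemma aux_zmod_count (n d : ℕ) [NeZero n] (hd : d ∣ n) :
    (univ.filter fun a : ZMod n => addOrderOf a = d).card = Nat.totient d := by
  have hdd : d ∣ Fintype.card (ZMod n) := by rwa [ZMod.card]
  have := IsAddCyclic.card_addOrderOf_eq_totient (α := ZMod n) (d := d) hdd
  simpa using this

lemma aux_totient_identity {a b : ℕ} (ha : 0 < a) (hb : 0 < b) :
    Nat.totient a * Nat.totient b
      = Nat.totient (Nat.gcd a b) * Nat.totient (Nat.lcm a b) := by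
  have hg : 0 < Nat.gcd a b := Nat.gcd_pos_of_pos_left _ ha
  have h1 := Nat.totient_gcd_mul_totient_mul a b
  have h2 := Nat.totient_gcd_mul_totient_mul (Nat.gcd a b) (Nat.lcm a b)
  have hdvd : Nat.gcd a b ∣ Nat.lcm a b :=
    (Nat.gcd_dvd_left a b).trans (Nat.dvd_lcm_left a b)
  rw [Nat.gcd_eq_left hdvd, Nat.gcd_mul_lcm] at h2
  exact Nat.eq_of_mul_eq_mul_right hg (h1.symm.trans h2)

theorem number_of_cyclic_subgroups_two (n₁ n₂ : ℕ) (h₁ : 0 < n₁) (h₂ : 0 < n₂) :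
    Nat.card {H : AddSubgroup (ZMod n₁ × ZMod n₂) // IsAddCyclic H} =
      ∑ d₁ ∈ n₁.divisors, ∑ d₂ ∈ n₂.divisors, Nat.totient (Nat.gcd d₁ d₂) := by
  classical
  haveI : NeZero n₁ := ⟨h₁.ne'⟩
  haveI : NeZero n₂ := ⟨h₂.ne'⟩
  set G := ZMod n₁ × ZMod n₂ with hGdef
  haveI : Finite (AddSubgroup G) :=
    Finite.of_injective (fun H : AddSubgroup G => (H : Set G)) SetLike.coe_injective
  haveI : Fintype (AddSubgroup G) := Fintype.ofFinite _
  set N := Nat.lcm n₁ n₂ with hNdef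
  have hN : N ≠ 0 := Nat.lcm_ne_zero h₁.ne' h₂.ne'
  have hord1 : ∀ a : ZMod n₁, addOrderOf a ∣ n₁ := fun a => by
    have := addOrderOf_dvd_card (x := a); rwa [ZMod.card] at this
  have hord2 : ∀ b : ZMod n₂, addOrderOf b ∣ n₂ := fun b => by
    have := addOrderOf_dvd_card (x := b); rwa [ZMod.card] at this
  rw [Nat.card_eq_fintype_card, Fintype.card_subtype]
  have hmem : ∀ H ∈ univ.filter (fun H : AddSubgroup G => IsAddCyclic H),
      Nat.card (H : AddSubgroup G) ∈ N.divisors := by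
    intro H hH
    rw [mem_filter] at hH
    obtain ⟨g, hg⟩ := aux_exists_zmultiples hH.2
    rw [← hg, Nat.card_zmultiples, Prod.addOrderOf, Nat.mem_divisors]
    exact ⟨Nat.lcm_dvd ((hord1 g.1).trans (Nat.dvd_lcm_left _ _))
      ((hord2 g.2).trans (Nat.dvd_lcm_right _ _)), hN⟩
  rw [card_eq_sum_card_fiberwise hmem]
  have claim : ∀ d ∈ N.divisors,
      ((univ.filter (fun H : AddSubgroup G => IsAddCyclic H)).filter
          (fun H : AddSubgroup G => Nat.card H = d)).card
        = ∑ d₁ ∈ n₁.divisors, ∑ d₂ ∈ n₂.divisors,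
            if Nat.lcm d₁ d₂ = d then Nat.totient (Nat.gcd d₁ d₂) else 0 := by
    intro d hdmem
    have hd0 : 0 < d := Nat.pos_of_mem_divisors hdmem
    have hφd : 0 < Nat.totient d := Nat.totient_pos.mpr hd0
    apply Nat.eq_of_mul_eq_mul_right hφd
    have hmem2 : ∀ g ∈ univ.filter (fun g : G => addOrderOf g = d),
        AddSubgroup.zmultiples g ∈
          (univ.filter (fun H : AddSubgroup G => IsAddCyclic H)).filter
            (fun H : AddSubgroup G => Nat.card H = d) := by
      intro g hg
      rw [mem_filter] at hg ⊢
      exact ⟨mem_filter.mpr ⟨mem_univ _, aux_isAddCyclic_zmultiples g⟩,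
        by rw [Nat.card_zmultiples]; exact hg.2⟩
    have hfibers : ∀ H ∈ (univ.filter (fun H : AddSubgroup G => IsAddCyclic H)).filter
          (fun H : AddSubgroup G => Nat.card H = d),
        ((univ.filter (fun g : G => addOrderOf g = d)).filter
            (fun g : G => AddSubgroup.zmultiples g = H)).card = Nat.totient d := by
      intro H hH
      rw [mem_filter, mem_filter] at hH
      rw [filter_filter]
      exact aux_fiber_card hH.1.2 hH.2
    have hA : (univ.filter (fun g : G => addOrderOf g = d)).card
        = ((univ.filter (fun H : AddSubgroup G => IsAddCyclic H)).filter
            (fun H : AddSubgroup G => Nat.card H = d)).card * Nat.totient d := by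
      rw [card_eq_sum_card_fiberwise hmem2, Finset.sum_congr rfl hfibers,
        Finset.sum_const, smul_eq_mul]
    rw [← hA]
    have hmem3 : ∀ g ∈ univ.filter (fun g : G => addOrderOf g = d),
        (addOrderOf g.1, addOrderOf g.2) ∈ n₁.divisors ×ˢ n₂.divisors := by
      intro g _
      rw [mem_product, Nat.mem_divisors, Nat.mem_divisors]
      exact ⟨⟨hord1 g.1, h₁.ne'⟩, ⟨hord2 g.2, h₂.ne'⟩⟩
    rw [card_eq_sum_card_fiberwise hmem3, Finset.sum_product]
    rw [Finset.sum_mul]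
    refine Finset.sum_congr rfl (fun d₁ hd₁ => ?_)
    rw [Finset.sum_mul]
    refine Finset.sum_congr rfl (fun d₂ hd₂ => ?_)
    rw [filter_filter]
    by_cases hl : Nat.lcm d₁ d₂ = d
    · rw [if_pos hl]
      have h10 : 0 < d₁ := Nat.pos_of_mem_divisors hd₁
      have h20 : 0 < d₂ := Nat.pos_of_mem_divisors hd₂
      have hfe : (univ.filter fun g : G =>
            addOrderOf g = d ∧ (addOrderOf g.1, addOrderOf g.2) = (d₁, d₂))
          = univ.filter (fun g : G => addOrderOf g.1 = d₁ ∧ addOrderOf g.2 = d₂) := by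
        ext g
        simp only [mem_filter, mem_univ, true_and, Prod.mk.injEq]
        constructor
        · rintro ⟨_, hh⟩; exact hh
        · rintro ⟨ha, hb⟩
          exact ⟨by rw [Prod.addOrderOf, ha, hb, hl], ha, hb⟩
      rw [hfe]
      have hcards : (univ.filter (fun g : G =>
            addOrderOf g.1 = d₁ ∧ addOrderOf g.2 = d₂)).card
          = (univ.filter fun a : ZMod n₁ => addOrderOf a = d₁).card
            * (univ.filter fun b : ZMod n₂ => addOrderOf b = d₂).card := by
        calc (univ.filter (fun g : G =>
              addOrderOf g.1 = d₁ ∧ addOrderOf g.2 = d₂)).card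
            = Fintype.card {g : G // addOrderOf g.1 = d₁ ∧ addOrderOf g.2 = d₂} :=
              (Fintype.card_subtype _).symm
          _ = Fintype.card ({a : ZMod n₁ // addOrderOf a = d₁}
                × {b : ZMod n₂ // addOrderOf b = d₂}) :=
              Fintype.card_congr (Equiv.subtypeProdEquivProd
                (p := fun a : ZMod n₁ => addOrderOf a = d₁)
                (q := fun b : ZMod n₂ => addOrderOf b = d₂))
          _ = Fintype.card {a : ZMod n₁ // addOrderOf a = d₁}
                * Fintype.card {b : ZMod n₂ // addOrderOf b = d₂} := Fintype.card_prod _ _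
          _ = _ := by rw [Fintype.card_subtype, Fintype.card_subtype]
      rw [hcards, aux_zmod_count n₁ d₁ (Nat.dvd_of_mem_divisors hd₁),
        aux_zmod_count n₂ d₂ (Nat.dvd_of_mem_divisors hd₂),
        aux_totient_identity h10 h20, hl]
    · rw [if_neg hl]
      rw [Finset.card_eq_zero.mpr, zero_mul]
      rw [Finset.filter_eq_empty_iff]
      rintro g -
      rintro ⟨hgd, hg12⟩
      apply hl
      rw [← hgd, Prod.addOrderOf]
      rw [Prod.mk.injEq] at hg12
      rw [hg12.1, hg12.2]
  rw [Finset.sum_congr rfl claim]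
  rw [Finset.sum_comm]
  refine Finset.sum_congr rfl (fun d₁ hd₁ => ?_)
  rw [Finset.sum_comm]
  refine Finset.sum_congr rfl (fun d₂ hd₂ => ?_)
  have hmeml : Nat.lcm d₁ d₂ ∈ N.divisors := by
    rw [Nat.mem_divisors]
    exact ⟨Nat.lcm_dvd ((Nat.dvd_of_mem_divisors hd₁).trans (Nat.dvd_lcm_left _ _))
      ((Nat.dvd_of_mem_divisors hd₂).trans (Nat.dvd_lcm_right _ _)), hN⟩
  rw [Finset.sum_ite_eq N.divisors (Nat.lcm d₁ d₂)
    (fun _ => Nat.totient (Nat.gcd d₁ d₂)), if_pos hmeml]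
end

section
/- Let r ≥ 1, let n₁, …, n_r be positive integers, set n = lcm(n₁, …, n_r), and let δ be a positive divisor of n. The number of elements of order δ in C_{n₁} × ⋯ × C_{n_r} equals ∑_{e ∣ δ} μ(δ/e) · gcd(e, n₁) ⋯ gcd(e, n_r), where μ is the Möbius function. (The identity holds in ℤ.) -/
open Finset
lemma card_nsmul_ker_zmod (m e : ℕ) (hm : m ≠ 0) :
    Nat.card {y : ZMod m // e • y = 0} = Nat.gcd e m := by
  haveI : NeZero m := ⟨hm⟩
  set f : ZMod m →+ ZMod m := AddMonoidHom.mk' (fun y => e • y) (fun a b => smul_add e a b)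
    with hf
  have hker : Nat.card {y : ZMod m // e • y = 0} = Nat.card f.ker := by
    apply Nat.card_congr
    exact Equiv.subtypeEquivRight (fun y => by simp [hf, AddMonoidHom.mem_ker])
  have hrange : f.range = AddSubgroup.zmultiples (e : ZMod m) := by
    ext z
    constructor
    · rintro ⟨y, rfl⟩
      refine ⟨(y.val : ℤ), ?_⟩
      simp only [hf, AddMonoidHom.mk'_apply, nsmul_eq_mul, zsmul_eq_mul]
      push_cast
      rw [ZMod.natCast_val, ZMod.cast_id, mul_comm]
    · rintro ⟨k, rfl⟩
      refine ⟨k • (1 : ZMod m), ?_⟩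
      simp only [hf, AddMonoidHom.mk'_apply]
      rw [smul_comm]
      simp [nsmul_eq_mul]
  have hcard : Nat.card (ZMod m) = Nat.card (ZMod m ⧸ f.ker) * Nat.card f.ker :=
    AddSubgroup.card_eq_card_quotient_mul_card_addSubgroup f.ker
  have hq : Nat.card (ZMod m ⧸ f.ker) = Nat.card f.range :=
    Nat.card_congr (QuotientAddGroup.quotientKerEquivRange f).toEquiv
  have hrangecard : Nat.card f.range = m / Nat.gcd m e := by
    rw [hrange, Nat.card_zmultiples, ZMod.addOrderOf_coe e hm]
  have hmcard : Nat.card (ZMod m) = m := Nat.card_zmod m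
  have hgcd : Nat.gcd m e ∣ m := Nat.gcd_dvd_left m e
  rw [hcard, hq, hrangecard] at hmcard
  rw [hker]
  have hpos : 0 < m / Nat.gcd m e :=
    Nat.div_pos (Nat.le_of_dvd (Nat.pos_of_ne_zero hm) hgcd)
      (Nat.gcd_pos_of_pos_left e (Nat.pos_of_ne_zero hm))
  have hk : Nat.card f.ker = Nat.gcd m e :=
    Nat.eq_of_mul_eq_mul_left hpos (hmcard.trans (Nat.div_mul_cancel hgcd).symm)
  rw [hk, Nat.gcd_comm]

lemma card_nsmul_ker_pi (r : ℕ) (n : Fin r → ℕ) (hn : ∀ i, 0 < n i) (e : ℕ) :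
    Nat.card {x : ∀ i, ZMod (n i) // e • x = 0} = ∏ i, Nat.gcd e (n i) := by
  haveI : ∀ i, NeZero (n i) := fun i => ⟨(hn i).ne'⟩
  have e1 : {x : ∀ i, ZMod (n i) // e • x = 0} ≃ ∀ i, {y : ZMod (n i) // e • y = 0} :=
    (Equiv.subtypeEquivRight (fun x => by simp [funext_iff])).trans Equiv.subtypePiEquivPi
  rw [Nat.card_congr e1, Nat.card_pi]
  exact Finset.prod_congr rfl fun i _ => card_nsmul_ker_zmod _ _ (hn i).ne'

lemma sum_card_order_eq (r : ℕ) (n : Fin r → ℕ) (hn : ∀ i, 0 < n i) (e : ℕ) (he : e ≠ 0) :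
    ∑ d ∈ e.divisors, Nat.card {x : ∀ i, ZMod (n i) // addOrderOf x = d} =
      Nat.card {x : ∀ i, ZMod (n i) // e • x = 0} := by
  classical
  haveI : ∀ i, NeZero (n i) := fun i => ⟨(hn i).ne'⟩
  have key := sum_card_addOrderOf_eq_card_nsmul_eq_zero (G := ∀ i, ZMod (n i)) he
  calc ∑ d ∈ e.divisors, Nat.card {x : ∀ i, ZMod (n i) // addOrderOf x = d}
      = ∑ d ∈ e.divisors, (Finset.univ.filter fun x : ∀ i, ZMod (n i) => addOrderOf x = d).card := by
        refine Finset.sum_congr rfl fun d _ => ?_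
        rw [Nat.card_eq_fintype_card, Fintype.card_subtype]
    _ = (Finset.univ.filter fun x : ∀ i, ZMod (n i) => e • x = 0).card := key
    _ = Nat.card {x : ∀ i, ZMod (n i) // e • x = 0} := by
        rw [Nat.card_eq_fintype_card, Fintype.card_subtype]

theorem number_of_elements_of_order_delta (r : ℕ) (hr : 1 ≤ r) (n : Fin r → ℕ)
    (hn : ∀ i, 0 < n i) (δ : ℕ) (hδ : 0 < δ) (hδn : δ ∣ Finset.univ.lcm n) :
    (Nat.card {x : ∀ i, ZMod (n i) // addOrderOf x = δ} : ℤ) =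
      ∑ e ∈ δ.divisors,
        ArithmeticFunction.moebius (δ / e) * ∏ i, (Nat.gcd e (n i) : ℤ) := by
  have H : ∀ m > 0, ∑ d ∈ m.divisors,
      ((Nat.card {x : ∀ i, ZMod (n i) // addOrderOf x = d} : ℤ)) =
      (fun e => ∏ i, (Nat.gcd e (n i) : ℤ)) m := by
    intro m hm
    show _ = ∏ i, (Nat.gcd m (n i) : ℤ)
    exact_mod_cast (sum_card_order_eq r n hn m hm.ne').trans (card_nsmul_ker_pi r n hn m)
  have key := (ArithmeticFunction.sum_eq_iff_sum_mul_moebius_eq.mp H) δ hδ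
  simp only [Int.cast_id] at key
  rw [Nat.sum_divisorsAntidiagonal'
    (f := fun a b => (ArithmeticFunction.moebius a : ℤ) * ∏ i, (Nat.gcd b (n i) : ℤ))] at key
  exact key.symm
end

section
/- Let p be a prime, let r ≥ 1 and a₁, …, a_r ≥ 1, and let ν satisfy 1 ≤ ν ≤ max(a₁, …, a_r). The number of cyclic subgroups of order p^ν of C_{p^{a₁}} × ⋯ × C_{p^{a_r}} equals ( p^{min(ν,a₁)+⋯+min(ν,a_r)} − p^{min(ν−1,a₁)+⋯+min(ν−1,a_r)} ) / ( p^{ν−1}(p−1) ). -/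
open Finset

-- the subgroup generated by one element is cyclic
lemma aux_isAddCyclic_zmultiples_s5 {G : Type*} [AddCommGroup G] (x : G) :
    IsAddCyclic (AddSubgroup.zmultiples x) := by
  refine ⟨⟨x, AddSubgroup.mem_zmultiples x⟩, ?_⟩
  rintro ⟨y, hy⟩
  obtain ⟨z, hz⟩ := (AddSubgroup.mem_zmultiples_iff).mp hy
  refine (AddSubgroup.mem_zmultiples_iff).mpr ⟨z, ?_⟩
  exact Subtype.ext (by simpa using hz)

-- counting the kernel of multiplication by p^m on ZMod (p^a)
lemma aux_card_ker (p : ℕ) (hp : p.Prime) (a m : ℕ) :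
    Nat.card {x : ZMod (p ^ a) // p ^ m • x = 0} = p ^ min m a := by
  haveI : NeZero (p ^ a) := ⟨pow_ne_zero _ hp.pos.ne'⟩
  set n := p ^ a with hn
  set c : ZMod n := ((p ^ m : ℕ) : ZMod n) with hc
  set f : ZMod n →+ ZMod n := AddMonoidHom.mulLeft c with hf
  have hker : Nat.card {x : ZMod n // p ^ m • x = 0} = Nat.card f.ker := by
    refine Nat.card_congr (Equiv.subtypeEquivRight fun x => ?_)
    simp [hf, AddMonoidHom.mem_ker, AddMonoidHom.mulLeft, nsmul_eq_mul, hc]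
  have hrange : f.range = AddSubgroup.zmultiples c := by
    ext y
    simp only [AddMonoidHom.mem_range, AddSubgroup.mem_zmultiples_iff, hf,
      AddMonoidHom.coe_mulLeft]
    constructor
    · rintro ⟨x, rfl⟩
      exact ⟨(x.val : ℤ), by
        rw [natCast_zsmul, nsmul_eq_mul, ZMod.natCast_rightInverse x]; exact mul_comm x c⟩
    · rintro ⟨k, rfl⟩
      exact ⟨(k : ZMod n), by rw [zsmul_eq_mul]; exact mul_comm c (k : ZMod n)⟩
  have hg : Nat.gcd n (p ^ m) = p ^ min a m := by
    refine Nat.dvd_antisymm ?_ (Nat.dvd_gcd (pow_dvd_pow _ (min_le_left _ _))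
      (pow_dvd_pow _ (min_le_right _ _)))
    obtain ⟨k, hk, hgk⟩ := (Nat.dvd_prime_pow hp).mp (Nat.gcd_dvd_left n (p ^ m))
    have hkm : k ≤ m := by
      have := hgk ▸ Nat.gcd_dvd_right n (p ^ m)
      exact (Nat.pow_dvd_pow_iff_le_right hp.one_lt).mp this
    rw [hgk]
    exact pow_dvd_pow _ (le_min hk hkm)
  have hrangecard : Nat.card f.range = n / p ^ min a m := by
    rw [hrange, hc, Nat.card_zmultiples, ZMod.addOrderOf_coe _ (NeZero.ne n), hg]
  have hquot : Nat.card (ZMod n ⧸ f.ker) = n / p ^ min a m := by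
    rw [Nat.card_congr (QuotientAddGroup.quotientKerEquivRange f).toEquiv, hrangecard]
  have htotal : n = Nat.card (ZMod n ⧸ f.ker) * Nat.card f.ker := by
    rw [← AddSubgroup.card_eq_card_quotient_mul_card_addSubgroup f.ker, Nat.card_zmod]
  rw [hker, min_comm]
  have hmin : min a m ≤ a := min_le_left _ _
  have hdiv : n / p ^ min a m * p ^ min a m = n := Nat.div_mul_cancel (pow_dvd_pow _ hmin)
  have hpos : 0 < n / p ^ min a m := by
    have : p ^ min a m ≤ n := Nat.pow_le_pow_right hp.pos hmin
    exact Nat.div_pos this (pow_pos hp.pos _)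
  have heq : n / p ^ min a m * Nat.card f.ker = n / p ^ min a m * p ^ min a m := by
    rw [hdiv, ← hquot]
    exact htotal.symm
  exact Nat.eq_of_mul_eq_mul_left hpos heq

-- global count of elements killed by p^m
lemma aux_card_global (p : ℕ) (hp : p.Prime) (r : ℕ) (a : Fin r → ℕ) (m : ℕ) :
    Nat.card {x : ∀ i, ZMod (p ^ a i) // p ^ m • x = 0} = p ^ ∑ i, min m (a i) := by
  have e1 : {x : ∀ i, ZMod (p ^ a i) // p ^ m • x = 0} ≃
      {x : ∀ i, ZMod (p ^ a i) // ∀ i, p ^ m • x i = 0} :=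
    Equiv.subtypeEquivRight fun x => by simp [funext_iff]
  have e2 := Equiv.subtypePiEquivPi (p := fun i (y : ZMod (p ^ a i)) => p ^ m • y = 0)
  rw [Nat.card_congr (e1.trans e2), Nat.card_pi]
  rw [← Finset.prod_pow_eq_pow_sum]
  exact Finset.prod_congr rfl fun i _ => aux_card_ker p hp (a i) m

theorem number_of_cyclic_subgroups_p_group (p : ℕ) (hp : p.Prime) (r : ℕ) (hr : 1 ≤ r)
    (a : Fin r → ℕ) (ha : ∀ i, 1 ≤ a i) (ν : ℕ) (hν₁ : 1 ≤ ν)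
    (hν₂ : ν ≤ Finset.univ.sup a) :
    p ^ (ν - 1) * (p - 1) *
        Nat.card {H : AddSubgroup (∀ i, ZMod (p ^ a i)) //
          IsAddCyclic H ∧ Nat.card H = p ^ ν} =
      p ^ (∑ i, min ν (a i)) - p ^ (∑ i, min (ν - 1) (a i)) := by
  classical
  haveI : ∀ i, NeZero (p ^ a i) := fun i => ⟨pow_ne_zero _ hp.pos.ne'⟩
  set G := ∀ i, ZMod (p ^ a i) with hG
  haveI : Fintype G := by unfold G; infer_instance
  haveI : Finite (AddSubgroup G) :=
    Finite.of_injective (fun H : AddSubgroup G => (H : Set G)) SetLike.coe_injective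
  haveI : Fintype (AddSubgroup G) := Fintype.ofFinite _
  set A : Finset G := univ.filter (fun x => p ^ ν • x = 0) with hA
  set B : Finset G := univ.filter (fun x => p ^ (ν - 1) • x = 0) with hB
  set ON : Finset G := univ.filter (fun x => addOrderOf x = p ^ ν) with hON
  have hAcard : A.card = p ^ ∑ i, min ν (a i) := by
    rw [← aux_card_global p hp r a ν, Nat.card_eq_fintype_card, Fintype.card_subtype]
  have hBcard : B.card = p ^ ∑ i, min (ν - 1) (a i) := by
    rw [← aux_card_global p hp r a (ν - 1), Nat.card_eq_fintype_card, Fintype.card_subtype]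
  have hsplit : A = B ∪ ON := by
    ext x
    simp only [hA, hB, hON, mem_union, mem_filter, mem_univ, true_and,
      ← addOrderOf_dvd_iff_nsmul_eq_zero]
    constructor
    · intro hdvd
      obtain ⟨k, hk, hxk⟩ := (Nat.dvd_prime_pow hp).mp hdvd
      rcases eq_or_lt_of_le hk with rfl | hlt
      · exact Or.inr hxk
      · exact Or.inl (hxk ▸ pow_dvd_pow _ (by omega))
    · rintro (h | h)
      · exact h.trans (pow_dvd_pow _ (by omega))
      · exact h ▸ dvd_rfl
  have hdisj : Disjoint B ON := by
    rw [Finset.disjoint_left]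
    intro x hxB hxON
    simp only [hB, hON, mem_filter, mem_univ, true_and,
      ← addOrderOf_dvd_iff_nsmul_eq_zero] at hxB hxON
    rw [hxON] at hxB
    have := (Nat.pow_dvd_pow_iff_le_right hp.one_lt).mp hxB
    omega
  have hcards : A.card = B.card + ON.card := by
    rw [hsplit, Finset.card_union_of_disjoint hdisj]
  set T : Finset (AddSubgroup G) :=
    univ.filter (fun H => IsAddCyclic H ∧ Nat.card H = p ^ ν) with hT
  have hmap : ∀ x ∈ ON, AddSubgroup.zmultiples x ∈ T := by
    intro x hx
    simp only [hON, mem_filter, mem_univ, true_and] at hx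
    simp only [hT, mem_filter, mem_univ, true_and]
    exact ⟨aux_isAddCyclic_zmultiples_s5 x, by rw [Nat.card_zmultiples, hx]⟩
  have hfiber : ∀ H ∈ T,
      (ON.filter (fun x => AddSubgroup.zmultiples x = H)).card = (p ^ ν).totient := by
    intro H hH
    simp only [hT, mem_filter, mem_univ, true_and] at hH
    obtain ⟨hcyc, hcard⟩ := hH
    haveI : IsAddCyclic H := hcyc
    have hcard' : Fintype.card H = p ^ ν := by rw [← Nat.card_eq_fintype_card, hcard]
    have htot := IsAddCyclic.card_addOrderOf_eq_totient (α := H) (d := p ^ ν)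
      (hcard' ▸ dvd_rfl)
    rw [← htot]
    refine Finset.card_bij' (fun x hx => (⟨x, ?_⟩ : H)) (fun y _ => (y : G)) ?_ ?_ ?_ ?_
    · have := (mem_filter.mp hx).2
      exact this ▸ AddSubgroup.mem_zmultiples x
    · intro x hx
      have h1 := mem_filter.mp hx
      have h2 := (mem_filter.mp h1.1).2
      simp only [mem_filter, mem_univ, true_and]
      simpa using h2
    · intro y hy
      simp only [mem_filter, mem_univ, true_and] at hy
      have hyo : addOrderOf (y : G) = p ^ ν := by
        rw [AddSubgroup.addOrderOf_coe]; exact hy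
      have heq : AddSubgroup.zmultiples (y : G) = H := by
        refine AddSubgroup.eq_of_le_of_card_ge
          (AddSubgroup.zmultiples_le_of_mem y.2) ?_
        rw [Nat.card_zmultiples, hyo, hcard]
      exact mem_filter.mpr ⟨mem_filter.mpr ⟨mem_univ _, hyo⟩, heq⟩
    · intro x hx; rfl
    · intro y hy; exact Subtype.ext rfl
  have hONcard : ON.card = T.card * (p ^ ν).totient := by
    rw [Finset.card_eq_sum_card_fiberwise hmap]
    rw [Finset.sum_congr rfl hfiber, Finset.sum_const, smul_eq_mul]
  have hTcard : Nat.card {H : AddSubgroup G //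
      IsAddCyclic H ∧ Nat.card H = p ^ ν} = T.card := by
    rw [Nat.card_eq_fintype_card, Fintype.card_subtype]
  rw [hTcard, ← hAcard, ← hBcard]
  have htotval : (p ^ ν).totient = p ^ (ν - 1) * (p - 1) :=
    Nat.totient_prime_pow hp (by omega)
  rw [htotval] at hONcard
  rw [mul_comm (p ^ (ν - 1) * (p - 1)) T.card, ← hONcard]
  omega
end

section
/- Let r ≥ 1 and let n₁, …, n_r, m₁, …, m_r be positive integers with gcd(n₁⋯n_r, m₁⋯m_r) = 1. Then the number of cyclic subgroups of C_{n₁m₁} × ⋯ × C_{n_rm_r} equals the product of the number of cyclic subgroups of C_{n₁} × ⋯ × C_{n_r} and the number of cyclic subgroups of C_{m₁} × ⋯ × C_{m_r}. -/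
open Finset

section Aux

variable {A B : Type*} [AddCommGroup A] [AddCommGroup B]

/-- Componentwise equivalence for pi of products. -/
def addEquivPiProd {ι : Type*} (α β : ι → Type*) [∀ i, AddGroup (α i)] [∀ i, AddGroup (β i)] :
    (∀ i, α i × β i) ≃+ (∀ i, α i) × (∀ i, β i) where
  toFun f := (fun i => (f i).1, fun i => (f i).2)
  invFun p := fun i => (p.1 i, p.2 i)
  left_inv f := rfl
  right_inv p := rfl
  map_add' f g := rfl

lemma key_decomp [Finite A] [Finite B]
    (h : Nat.Coprime (Nat.card A) (Nat.card B)) (H : AddSubgroup (A × B))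
    {a : A} {b : B} (hab : (a, b) ∈ H) : (a, 0) ∈ H ∧ (0, b) ∈ H := by
  set c : ℕ := Nat.card A with hc
  set d : ℕ := Nat.card B with hd
  have hbez : (1 : ℤ) = c * Nat.gcdA c d + d * Nat.gcdB c d := by
    have := Nat.gcd_eq_gcd_ab c d
    rw [h] at this
    exact_mod_cast this
  set x : ℤ := Nat.gcdA c d
  set y : ℤ := Nat.gcdB c d
  have hca : ∀ a' : A, ((c : ℤ) * x) • a' = 0 := by
    intro a'
    rw [mul_smul, natCast_zsmul, card_nsmul_eq_zero']
  have hdb : ∀ b' : B, ((d : ℤ) * y) • b' = 0 := by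
    intro b'
    rw [mul_smul, natCast_zsmul, card_nsmul_eq_zero']
  have h1 : ((d : ℤ) * y) • (a, b) = ((a, 0) : A × B) := by
    have hdy : ((d : ℤ) * y) = 1 - (c : ℤ) * x := by linarith
    ext
    · show ((d : ℤ) * y) • a = a
      rw [hdy, sub_smul, one_smul, hca, sub_zero]
    · show ((d : ℤ) * y) • b = 0
      exact hdb b
  have h2 : ((c : ℤ) * x) • (a, b) = ((0, b) : A × B) := by
    have hcx : ((c : ℤ) * x) = 1 - (d : ℤ) * y := by linarith
    ext
    · show ((c : ℤ) * x) • a = 0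
      exact hca a
    · show ((c : ℤ) * x) • b = b
      rw [hcx, sub_smul, one_smul, hdb, sub_zero]
  exact ⟨h1 ▸ H.zsmul_mem hab _, h2 ▸ H.zsmul_mem hab _⟩

lemma addSubgroup_eq_prod [Finite A] [Finite B]
    (h : Nat.Coprime (Nat.card A) (Nat.card B)) (H : AddSubgroup (A × B)) :
    H = (H.map (AddMonoidHom.fst A B)).prod (H.map (AddMonoidHom.snd A B)) := by
  apply le_antisymm
  · intro x hx
    exact ⟨⟨x, hx, rfl⟩, ⟨x, hx, rfl⟩⟩
  · rintro ⟨a, b⟩ ⟨⟨⟨a₁, b₁⟩, h1, rfl⟩, ⟨⟨a₂, b₂⟩, h2, rfl⟩⟩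
    have k1 := (key_decomp h H h1).1
    have k2 := (key_decomp h H h2).2
    simpa using H.add_mem k1 k2

lemma isAddCyclic_prod [Finite A] [Finite B] (hA : IsAddCyclic A) (hB : IsAddCyclic B)
    (h : Nat.Coprime (Nat.card A) (Nat.card B)) : IsAddCyclic (A × B) := by
  let e1 : ZMod (Nat.card A * Nat.card B) ≃+ ZMod (Nat.card A) × ZMod (Nat.card B) :=
    (ZMod.chineseRemainder h).toAddEquiv
  let e2 : ZMod (Nat.card A) × ZMod (Nat.card B) ≃+ A × B :=
    AddEquiv.prodCongr (zmodAddCyclicAddEquiv hA) (zmodAddCyclicAddEquiv hB)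
  exact isAddCyclic_of_surjective (e1.trans e2).toAddMonoidHom (e1.trans e2).surjective

lemma isAddCyclic_map {G G' : Type*} [AddGroup G] [AddGroup G'] (f : G →+ G')
    (H : AddSubgroup G) (hH : IsAddCyclic H) : IsAddCyclic (H.map f) :=
  isAddCyclic_of_surjective (f.addSubgroupMap H) (f.addSubgroupMap_surjective H)

lemma map_fst_prod (K₁ : AddSubgroup A) (K₂ : AddSubgroup B) :
    (K₁.prod K₂).map (AddMonoidHom.fst A B) = K₁ := by
  ext x
  constructor
  · rintro ⟨⟨a, b⟩, ⟨h1, _⟩, rfl⟩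
    exact h1
  · intro hx
    exact ⟨(x, 0), ⟨hx, K₂.zero_mem⟩, rfl⟩

lemma map_snd_prod (K₁ : AddSubgroup A) (K₂ : AddSubgroup B) :
    (K₁.prod K₂).map (AddMonoidHom.snd A B) = K₂ := by
  ext x
  constructor
  · rintro ⟨⟨a, b⟩, ⟨_, h2⟩, rfl⟩
    exact h2
  · intro hx
    exact ⟨(0, x), ⟨K₁.zero_mem, hx⟩, rfl⟩

/-- Equivalence of cyclic subgroups of a product with the product of cyclic subgroups. -/
noncomputable def cyclicSubgroupProdEquiv [Finite A] [Finite B]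
    (h : Nat.Coprime (Nat.card A) (Nat.card B)) :
    {H : AddSubgroup (A × B) // IsAddCyclic H} ≃
      {H : AddSubgroup A // IsAddCyclic H} × {H : AddSubgroup B // IsAddCyclic H} where
  toFun H := (⟨H.1.map (AddMonoidHom.fst A B), isAddCyclic_map _ _ H.2⟩,
    ⟨H.1.map (AddMonoidHom.snd A B), isAddCyclic_map _ _ H.2⟩)
  invFun K := ⟨K.1.1.prod K.2.1, by
    have h' : Nat.Coprime (Nat.card K.1.1) (Nat.card K.2.1) :=
      Nat.Coprime.coprime_dvd_left (AddSubgroup.card_addSubgroup_dvd_card K.1.1)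
        (Nat.Coprime.coprime_dvd_right (AddSubgroup.card_addSubgroup_dvd_card K.2.1) h)
    have := isAddCyclic_prod K.1.2 K.2.2 h'
    exact isAddCyclic_of_surjective (K.1.1.prodEquiv K.2.1).symm.toAddMonoidHom
      (K.1.1.prodEquiv K.2.1).symm.surjective⟩
  left_inv H := Subtype.ext (addSubgroup_eq_prod h H.1).symm
  right_inv K := by
    ext : 2
    · exact map_fst_prod K.1.1 K.2.1
    · exact map_snd_prod K.1.1 K.2.1

/-- Transporting cyclic subgroups along an AddEquiv. -/
def cyclicSubgroupCongr {G G' : Type*} [AddGroup G] [AddGroup G'] (e : G ≃+ G') :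
    {H : AddSubgroup G // IsAddCyclic H} ≃ {H : AddSubgroup G' // IsAddCyclic H} where
  toFun H := ⟨H.1.map e.toAddMonoidHom, isAddCyclic_map _ _ H.2⟩
  invFun H := ⟨H.1.map e.symm.toAddMonoidHom, isAddCyclic_map _ _ H.2⟩
  left_inv H := by
    refine Subtype.ext ?_
    dsimp only
    rw [AddSubgroup.map_map]
    have : e.symm.toAddMonoidHom.comp e.toAddMonoidHom = AddMonoidHom.id G := by
      ext x; simp
    rw [this, AddSubgroup.map_id]
  right_inv H := by
    refine Subtype.ext ?_
    dsimp only
    rw [AddSubgroup.map_map]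
    have : e.toAddMonoidHom.comp e.symm.toAddMonoidHom = AddMonoidHom.id G' := by
      ext x; simp
    rw [this, AddSubgroup.map_id]

end Aux

theorem cyclic_subgroup_count_multiplicative (r : ℕ) (hr : 1 ≤ r) (n m : Fin r → ℕ)
    (hn : ∀ i, 0 < n i) (hm : ∀ i, 0 < m i)
    (hcop : Nat.gcd (∏ i, n i) (∏ i, m i) = 1) :
    Nat.card {H : AddSubgroup (∀ i, ZMod (n i * m i)) // IsAddCyclic H} =
      Nat.card {H : AddSubgroup (∀ i, ZMod (n i)) // IsAddCyclic H} *
        Nat.card {H : AddSubgroup (∀ i, ZMod (m i)) // IsAddCyclic H} := by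
  haveI : ∀ i, NeZero (n i) := fun i => ⟨(hn i).ne'⟩
  haveI : ∀ i, NeZero (m i) := fun i => ⟨(hm i).ne'⟩
  have hcopi : ∀ i, Nat.Coprime (n i) (m i) := fun i =>
    Nat.Coprime.coprime_dvd_left (Finset.dvd_prod_of_mem n (Finset.mem_univ i))
      (Nat.Coprime.coprime_dvd_right (Finset.dvd_prod_of_mem m (Finset.mem_univ i)) hcop)
  let e1 : (∀ i, ZMod (n i * m i)) ≃+ ∀ i, ZMod (n i) × ZMod (m i) :=
    AddEquiv.piCongrRight fun i => (ZMod.chineseRemainder (hcopi i)).toAddEquiv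
  let e2 : (∀ i, ZMod (n i) × ZMod (m i)) ≃+ (∀ i, ZMod (n i)) × (∀ i, ZMod (m i)) :=
    addEquivPiProd _ _
  have hcardn : Nat.card (∀ i, ZMod (n i)) = ∏ i, n i := by
    simp [Nat.card_pi, Nat.card_zmod]
  have hcardm : Nat.card (∀ i, ZMod (m i)) = ∏ i, m i := by
    simp [Nat.card_pi, Nat.card_zmod]
  have hcop' : Nat.Coprime (Nat.card (∀ i, ZMod (n i))) (Nat.card (∀ i, ZMod (m i))) := by
    rw [hcardn, hcardm]; exact hcop
  rw [Nat.card_congr ((cyclicSubgroupCongr (e1.trans e2)).trans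
    (cyclicSubgroupProdEquiv hcop')), Nat.card_prod]
end

section
/- Let r ≥ 1 and let n₁, …, n_r, m₁, …, m_r be positive integers with gcd(n₁⋯n_r, m₁⋯m_r) = 1. Set n = lcm(n₁, …, n_r) and m = lcm(m₁, …, m_r). Let δ ∣ nm and write δ = a·b with a ∣ n and b ∣ m (this factorization is unique). Then the number of cyclic subgroups of order δ of C_{n₁m₁} × ⋯ × C_{n_rm_r} equals the number of cyclic subgroups of order a of C_{n₁} × ⋯ × C_{n_r} times the number of cyclic subgroups of order b of C_{m₁} × ⋯ × C_{m_r}. -/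
open Finset

section Aux

variable {G H : Type*} [AddGroup G] [AddGroup H]

/-- The `AddEquiv` between a pi type of products and the product of pi types. -/
def piProdAddEquiv {ι : Type*} (A B : ι → Type*) [∀ i, AddGroup (A i)] [∀ i, AddGroup (B i)] :
    (∀ i, A i × B i) ≃+ (∀ i, A i) × (∀ i, B i) where
  toFun f := (fun i => (f i).1, fun i => (f i).2)
  invFun p i := (p.1 i, p.2 i)
  left_inv f := rfl
  right_inv p := rfl
  map_add' f g := rfl

lemma mem_of_mem_coprime (hcop : Nat.Coprime (Nat.card G) (Nat.card H))
    (L : AddSubgroup (G × H)) {w : G × H} (hw : w ∈ L) : (w.1, (0 : H)) ∈ L := by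
  have h2 : (Nat.card H) • w.2 = 0 :=
    addOrderOf_dvd_iff_nsmul_eq_zero.mp (addOrderOf_dvd_natCard w.2)
  have hc : (Nat.card H).Coprime (addOrderOf w.1) :=
    Nat.Coprime.coprime_dvd_right (addOrderOf_dvd_natCard w.1) hcop.symm
  obtain ⟨k, hk⟩ := exists_nsmul_eq_self_of_coprime hc
  have : k • ((Nat.card H) • w) ∈ L := L.nsmul_mem (L.nsmul_mem hw _) _
  convert this using 1
  ext
  · simp [Prod.smul_fst, hk]
  · simp [Prod.smul_snd, h2]

lemma addSubgroup_prod_decomp (hcop : Nat.Coprime (Nat.card G) (Nat.card H))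
    (L : AddSubgroup (G × H)) :
    L = (L.map (AddMonoidHom.fst G H)).prod (L.map (AddMonoidHom.snd G H)) := by
  apply le_antisymm
  · intro x hx
    exact AddSubgroup.mem_prod.mpr ⟨⟨x, hx, rfl⟩, ⟨x, hx, rfl⟩⟩
  · intro z hz
    obtain ⟨h1, h2⟩ := AddSubgroup.mem_prod.mp hz
    obtain ⟨w, hw, hw1⟩ := h1
    obtain ⟨v, hv, hv2⟩ := h2
    have hwl : (w.1, (0 : H)) ∈ L := mem_of_mem_coprime hcop L hw
    have hvl : ((0 : G), v.2) ∈ L := by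
      have := mem_of_mem_coprime hcop L hv
      have h := L.sub_mem hv this
      convert h using 1
      ext <;> simp
    have : (w.1, (0:H)) + ((0:G), v.2) ∈ L := L.add_mem hwl hvl
    convert this using 1
    ext
    · simp [← hw1]
    · simp [← hv2]

lemma isAddCyclic_prod_s8 [Finite G] [Finite H] [IsAddCyclic G] [IsAddCyclic H]
    (hcop : Nat.Coprime (Nat.card G) (Nat.card H)) : IsAddCyclic (G × H) := by
  obtain ⟨g, hg⟩ := IsAddCyclic.exists_generator (α := G)
  obtain ⟨h, hh⟩ := IsAddCyclic.exists_generator (α := H)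
  have hgo : addOrderOf g = Nat.card G := addOrderOf_eq_card_of_forall_mem_zmultiples hg
  have hho : addOrderOf h = Nat.card H := addOrderOf_eq_card_of_forall_mem_zmultiples hh
  apply isAddCyclic_of_addOrderOf_eq_card (g, h)
  rw [Prod.addOrderOf, Nat.card_prod]
  simp only [hgo, hho]
  exact Nat.Coprime.lcm_eq_mul hcop

lemma map_cyclic_card (e : G ≃+ H) (p : ℕ) (K : AddSubgroup G)
    (h : IsAddCyclic K ∧ Nat.card K = p) :
    IsAddCyclic (K.map (e : G →+ H)) ∧ Nat.card (K.map (e : G →+ H)) = p := by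
  obtain ⟨h1, h2⟩ := h
  have e' := e.addSubgroupMap K
  constructor
  · exact isAddCyclic_of_surjective e'.toAddMonoidHom e'.surjective
  · rw [← Nat.card_congr e'.toEquiv, h2]

/-- Transporting the count of cyclic subgroups of a given order along an `AddEquiv`. -/
lemma card_cyclic_subgroups_congr (e : G ≃+ H) (p : ℕ) :
    Nat.card {K : AddSubgroup G // IsAddCyclic K ∧ Nat.card K = p} =
      Nat.card {K : AddSubgroup H // IsAddCyclic K ∧ Nat.card K = p} := by
  apply Nat.card_congr
  refine ⟨fun K => ⟨K.1.map (e : G →+ H), map_cyclic_card e p K.1 K.2⟩,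
    fun K => ⟨K.1.map (e.symm : H →+ G), map_cyclic_card e.symm p K.1 K.2⟩, ?_, ?_⟩
  · intro K
    apply Subtype.ext
    ext x
    simp only [AddSubgroup.mem_map, AddMonoidHom.coe_coe]
    constructor
    · rintro ⟨y, ⟨z, hz, rfl⟩, rfl⟩
      simpa using hz
    · intro hx
      exact ⟨e x, ⟨x, hx, rfl⟩, e.symm_apply_apply x⟩
  · intro K
    apply Subtype.ext
    ext x
    simp only [AddSubgroup.mem_map, AddMonoidHom.coe_coe]
    constructor
    · rintro ⟨y, ⟨z, hz, rfl⟩, rfl⟩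
      simpa using hz
    · intro hx
      exact ⟨e.symm x, ⟨x, hx, rfl⟩, e.apply_symm_apply x⟩

lemma count_prod {G H : Type*} [AddCommGroup G] [AddCommGroup H] [Finite G] [Finite H]
    (hGH : Nat.Coprime (Nat.card G) (Nat.card H)) (a b : ℕ)
    (hadvd : a ∣ Nat.card G) (hbdvd : b ∣ Nat.card H) :
    Nat.card {L : AddSubgroup (G × H) // IsAddCyclic L ∧ Nat.card L = a * b} =
      Nat.card {K : AddSubgroup G // IsAddCyclic K ∧ Nat.card K = a} *
        Nat.card {K : AddSubgroup H // IsAddCyclic K ∧ Nat.card K = b} := by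
  have apos : 0 < a := Nat.pos_of_dvd_of_pos hadvd Nat.card_pos
  have bpos : 0 < b := Nat.pos_of_dvd_of_pos hbdvd Nat.card_pos
  have hcab : Nat.Coprime a b :=
    Nat.Coprime.coprime_dvd_left hadvd (Nat.Coprime.coprime_dvd_right hbdvd hGH)
  rw [← Nat.card_prod]
  apply Nat.card_congr
  have cardprod : ∀ (K₁ : AddSubgroup G) (K₂ : AddSubgroup H),
      Nat.card (K₁.prod K₂) = Nat.card K₁ * Nat.card K₂ := fun K₁ K₂ => by
    rw [Nat.card_congr (AddSubgroup.prodEquiv K₁ K₂).toEquiv, Nat.card_prod]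
  have hfwd : ∀ L : AddSubgroup (G × H), (IsAddCyclic L ∧ Nat.card L = a * b) →
      (IsAddCyclic (L.map (AddMonoidHom.fst G H)) ∧
        Nat.card (L.map (AddMonoidHom.fst G H)) = a) ∧
      (IsAddCyclic (L.map (AddMonoidHom.snd G H)) ∧
        Nat.card (L.map (AddMonoidHom.snd G H)) = b) := by
    rintro L ⟨hLc, hLcard⟩
    haveI := hLc
    set H₁ := L.map (AddMonoidHom.fst G H) with hH₁
    set H₂ := L.map (AddMonoidHom.snd G H) with hH₂
    have hdec := addSubgroup_prod_decomp hGH L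
    have hmul : Nat.card H₁ * Nat.card H₂ = a * b := by
      rw [← cardprod, ← hdec, hLcard]
    have h1a : Nat.card H₁ ∣ a := by
      have h1 : Nat.card H₁ ∣ Nat.card G := AddSubgroup.card_addSubgroup_dvd_card H₁
      have h1b : Nat.Coprime (Nat.card H₁) b :=
        Nat.Coprime.coprime_dvd_left h1 (Nat.Coprime.coprime_dvd_right hbdvd hGH)
      exact (Nat.Coprime.dvd_of_dvd_mul_right h1b) ⟨Nat.card H₂, hmul.symm⟩
    have hle1 := Nat.le_of_dvd apos h1a
    have h2b : Nat.card H₂ ∣ Nat.card H := AddSubgroup.card_addSubgroup_dvd_card H₂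
    have hle2 : Nat.card H₂ ≤ b := by
      have h2a : Nat.Coprime (Nat.card H₂) a :=
        Nat.Coprime.coprime_dvd_left h2b (Nat.Coprime.coprime_dvd_right hadvd hGH.symm)
      refine Nat.le_of_dvd bpos ((Nat.Coprime.dvd_of_dvd_mul_left h2a)
        ⟨Nat.card H₁, by rw [← hmul]; ring⟩)
    have hge1 : a ≤ Nat.card H₁ := by
      have hb' : a * b ≤ Nat.card H₁ * b := by
        calc a * b = Nat.card H₁ * Nat.card H₂ := hmul.symm
        _ ≤ Nat.card H₁ * b := Nat.mul_le_mul le_rfl hle2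
      exact Nat.le_of_mul_le_mul_right hb' bpos
    have heq1 : Nat.card H₁ = a := le_antisymm hle1 hge1
    have heq2 : Nat.card H₂ = b := by
      rw [heq1] at hmul
      exact Nat.eq_of_mul_eq_mul_left apos hmul
    exact ⟨⟨isAddCyclic_of_surjective _ ((AddMonoidHom.fst G H).addSubgroupMap_surjective L),
        heq1⟩,
      ⟨isAddCyclic_of_surjective _ ((AddMonoidHom.snd G H).addSubgroupMap_surjective L), heq2⟩⟩
  have hbwd : ∀ (K₁ : AddSubgroup G) (K₂ : AddSubgroup H),
      (IsAddCyclic K₁ ∧ Nat.card K₁ = a) → (IsAddCyclic K₂ ∧ Nat.card K₂ = b) →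
      (IsAddCyclic (K₁.prod K₂) ∧ Nat.card (K₁.prod K₂) = a * b) := by
    rintro K₁ K₂ ⟨h1c, h1⟩ ⟨h2c, h2⟩
    haveI := h1c; haveI := h2c
    have hc : Nat.Coprime (Nat.card K₁) (Nat.card K₂) := by rw [h1, h2]; exact hcab
    haveI := isAddCyclic_prod_s8 hc
    constructor
    · exact isAddCyclic_of_surjective (AddSubgroup.prodEquiv K₁ K₂).symm.toAddMonoidHom
        (AddSubgroup.prodEquiv K₁ K₂).symm.surjective
    · rw [cardprod, h1, h2]
  refine ⟨fun L => (⟨L.1.map (AddMonoidHom.fst G H), (hfwd L.1 L.2).1⟩,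
      ⟨L.1.map (AddMonoidHom.snd G H), (hfwd L.1 L.2).2⟩),
    fun P => ⟨P.1.1.prod P.2.1, hbwd P.1.1 P.2.1 P.1.2 P.2.2⟩, ?_, ?_⟩
  · intro L
    exact Subtype.ext (addSubgroup_prod_decomp hGH L.1).symm
  · rintro ⟨⟨K₁, h1⟩, ⟨K₂, h2⟩⟩
    refine Prod.ext (Subtype.ext ?_) (Subtype.ext ?_)
    · ext x
      simp only [AddSubgroup.mem_map, AddSubgroup.mem_prod]
      constructor
      · rintro ⟨p, ⟨hp1, hp2⟩, rfl⟩
        exact hp1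
      · intro hx
        exact ⟨(x, 0), ⟨hx, K₂.zero_mem⟩, rfl⟩
    · ext x
      simp only [AddSubgroup.mem_map, AddSubgroup.mem_prod]
      constructor
      · rintro ⟨p, ⟨hp1, hp2⟩, rfl⟩
        exact hp2
      · intro hx
        exact ⟨(0, x), ⟨K₁.zero_mem, hx⟩, rfl⟩

end Aux

theorem cyclic_subgroup_order_count_multiplicative (r : ℕ) (hr : 1 ≤ r)
    (n m : Fin r → ℕ) (hn : ∀ i, 0 < n i) (hm : ∀ i, 0 < m i)
    (hcop : Nat.gcd (∏ i, n i) (∏ i, m i) = 1)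
    (δ a b : ℕ) (hδ : δ ∣ Finset.univ.lcm n * Finset.univ.lcm m)
    (ha : a ∣ Finset.univ.lcm n) (hb : b ∣ Finset.univ.lcm m) (hab : δ = a * b) :
    Nat.card {H : AddSubgroup (∀ i, ZMod (n i * m i)) //
        IsAddCyclic H ∧ Nat.card H = δ} =
      Nat.card {H : AddSubgroup (∀ i, ZMod (n i)) //
          IsAddCyclic H ∧ Nat.card H = a} *
        Nat.card {H : AddSubgroup (∀ i, ZMod (m i)) //
          IsAddCyclic H ∧ Nat.card H = b} := by
  haveI fn : ∀ i, Finite (ZMod (n i)) := fun i => by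
    haveI : NeZero (n i) := ⟨(hn i).ne'⟩
    infer_instance
  haveI fm : ∀ i, Finite (ZMod (m i)) := fun i => by
    haveI : NeZero (m i) := ⟨(hm i).ne'⟩
    infer_instance
  haveI : Finite (∀ i, ZMod (n i)) := Pi.finite
  haveI : Finite (∀ i, ZMod (m i)) := Pi.finite
  have copi : ∀ i, Nat.Coprime (n i) (m i) := fun i =>
    Nat.Coprime.coprime_dvd_left (Finset.dvd_prod_of_mem n (Finset.mem_univ i))
      (Nat.Coprime.coprime_dvd_right (Finset.dvd_prod_of_mem m (Finset.mem_univ i)) hcop)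
  let e : (∀ i, ZMod (n i * m i)) ≃+ (∀ i, ZMod (n i)) × (∀ i, ZMod (m i)) :=
    (AddEquiv.piCongrRight fun i => (ZMod.chineseRemainder (copi i)).toAddEquiv).trans
      (piProdAddEquiv _ _)
  rw [card_cyclic_subgroups_congr e δ, hab]
  have cardG : Nat.card (∀ i, ZMod (n i)) = ∏ i, n i := by simp [Nat.card_pi]
  have cardH : Nat.card (∀ i, ZMod (m i)) = ∏ i, m i := by simp [Nat.card_pi]
  have hlcn : Finset.univ.lcm n ∣ ∏ i, n i :=
    Finset.lcm_dvd fun i _ => Finset.dvd_prod_of_mem n (Finset.mem_univ i)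
  have hlcm : Finset.univ.lcm m ∣ ∏ i, m i :=
    Finset.lcm_dvd fun i _ => Finset.dvd_prod_of_mem m (Finset.mem_univ i)
  apply count_prod
  · rw [cardG, cardH]; exact hcop
  · rw [cardG]; exact ha.trans hlcn
  · rw [cardH]; exact hb.trans hlcm
end

section
/- For every r ≥ 1 and every positive integer δ, the sum of φ(d₁)⋯φ(d_r), taken over all ordered r-tuples (d₁, …, d_r) of positive integers with lcm(d₁, …, d_r) = δ, equals the Jordan totient φ_r(δ). -/
open Finset

theorem von_sterneck_eq_jordan_totient (r : ℕ) (hr : 1 ≤ r) (δ : ℕ) (hδ : 0 < δ) :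
    (∑ d ∈ (Fintype.piFinset (fun _ : Fin r => δ.divisors)).filter
        (fun d => Finset.univ.lcm d = δ),
      ∏ i, (Nat.totient (d i) : ℤ)) =
      ∑ e ∈ δ.divisors, (e : ℤ) ^ r * ArithmeticFunction.moebius (δ / e) := by
  set f : ℕ → ℤ := fun n =>
    ∑ d ∈ (Fintype.piFinset (fun _ : Fin r => n.divisors)).filter
        (fun d => Finset.univ.lcm d = n), ∏ i, (Nat.totient (d i) : ℤ) with hf
  have key : ∀ (n : ℕ), n > 0 → ∑ i ∈ n.divisors, f i = (n : ℤ) ^ r := by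
    intro n hn
    have h1 : ∀ e ∈ n.divisors,
        f e = ∑ d ∈ (Fintype.piFinset (fun _ : Fin r => n.divisors)).filter
          (fun d => Finset.univ.lcm d = e), ∏ i, (Nat.totient (d i) : ℤ) := by
      intro e he
      obtain ⟨hed, hn0⟩ := Nat.mem_divisors.mp he
      have he0 : 0 < e := Nat.pos_of_mem_divisors he
      refine Finset.sum_congr ?_ fun _ _ => rfl
      ext d
      simp only [Finset.mem_filter, Fintype.mem_piFinset, Nat.mem_divisors]
      constructor
      · rintro ⟨h, rfl⟩
        exact ⟨fun i => ⟨(h i).1.trans hed, hn0⟩, rfl⟩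
      · rintro ⟨h, rfl⟩
        exact ⟨fun i => ⟨Finset.dvd_lcm (Finset.mem_univ i), he0.ne'⟩, rfl⟩
    rw [Finset.sum_congr rfl h1]
    rw [Finset.sum_fiberwise_of_maps_to (fun d hd => by
      simp only [Fintype.mem_piFinset, Nat.mem_divisors] at hd
      exact Nat.mem_divisors.mpr ⟨Finset.lcm_dvd (fun i _ => (hd i).1), hn.ne'⟩)]
    rw [← Finset.prod_univ_sum (t := fun _ : Fin r => n.divisors) (f := fun _ d => (Nat.totient d : ℤ))]
    have : ∑ d ∈ n.divisors, (Nat.totient d : ℤ) = (n : ℤ) := by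
      rw [← Nat.cast_sum]
      exact_mod_cast congrArg (Nat.cast : ℕ → ℤ) (Nat.sum_totient n)
    rw [Finset.prod_congr rfl (fun i _ => this), Finset.prod_const, Finset.card_univ,
      Fintype.card_fin]
  have inv := (ArithmeticFunction.sum_eq_iff_sum_smul_moebius_eq
    (f := f) (g := fun n => (n : ℤ) ^ r)).mp key δ hδ
  show f δ = _
  rw [← inv, ← Nat.sum_divisorsAntidiagonal'
    (f := fun a b => ((b : ℤ) ^ r * ArithmeticFunction.moebius a))]
  exact Finset.sum_congr rfl fun x _ => by rw [smul_eq_mul, mul_comm]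
end

section
/- Let n₁, n₂ be positive integers. The total number of subgroups of C_{n₁} × C_{n₂} equals the sum, over all pairs (d₁, d₂) with d₁ ∣ n₁ and d₂ ∣ n₂, of gcd(d₁, d₂). -/
open Finset

namespace SubgroupCount

variable {G₁ G₂ : Type*} [AddCommGroup G₁] [AddCommGroup G₂]

def Afst (H : AddSubgroup (G₁ × G₂)) : AddSubgroup G₁ := H.comap (AddMonoidHom.inl G₁ G₂)

def Bsnd (H : AddSubgroup (G₁ × G₂)) : AddSubgroup G₂ := H.map (AddMonoidHom.snd G₁ G₂)

lemma mem_Afst {H : AddSubgroup (G₁ × G₂)} {x : G₁} : x ∈ Afst H ↔ ((x, 0) : G₁ × G₂) ∈ H :=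
  Iff.rfl

lemma mem_Bsnd {H : AddSubgroup (G₁ × G₂)} {y : G₂} : y ∈ Bsnd H ↔ ∃ x, ((x, y) : G₁ × G₂) ∈ H := by
  constructor
  · rintro ⟨⟨x, y'⟩, hm, rfl⟩; exact ⟨x, hm⟩
  · rintro ⟨x, hx⟩; exact ⟨(x, y), hx, rfl⟩

lemma mk_eq_mk_of_mem {H : AddSubgroup (G₁ × G₂)} {x₁ x₂ : G₁} {y : G₂}
    (h₁ : ((x₁, y) : G₁ × G₂) ∈ H) (h₂ : ((x₂, y) : G₁ × G₂) ∈ H) :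
    (x₁ : G₁ ⧸ Afst H) = (x₂ : G₁ ⧸ Afst H) := by
  rw [QuotientAddGroup.eq]
  have := H.add_mem (H.neg_mem h₁) h₂
  simpa [mem_Afst, Prod.ext_iff] using this

noncomputable def wit (H : AddSubgroup (G₁ × G₂)) (b : Bsnd H) : G₁ :=
  (mem_Bsnd.mp b.2).choose

lemma wit_mem (H : AddSubgroup (G₁ × G₂)) (b : Bsnd H) : ((wit H b, (b : G₂)) : G₁ × G₂) ∈ H :=
  (mem_Bsnd.mp b.2).choose_spec

noncomputable def fquot0 (H : AddSubgroup (G₁ × G₂)) : Bsnd H → G₁ ⧸ Afst H :=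
  fun b => QuotientAddGroup.mk (s := Afst H) (wit H b)

lemma fquot0_add (H : AddSubgroup (G₁ × G₂)) (b₁ b₂ : Bsnd H) :
    fquot0 H (b₁ + b₂) = fquot0 H b₁ + fquot0 H b₂ := by
  have hsum : ((wit H b₁ + wit H b₂, ((b₁ + b₂ : Bsnd H) : G₂)) : G₁ × G₂) ∈ H := by
    simpa using H.add_mem (wit_mem H b₁) (wit_mem H b₂)
  show QuotientAddGroup.mk (s := Afst H) (wit H (b₁ + b₂)) =
    QuotientAddGroup.mk (s := Afst H) (wit H b₁) + QuotientAddGroup.mk (s := Afst H) (wit H b₂)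
  rw [← QuotientAddGroup.mk_add]
  exact mk_eq_mk_of_mem (wit_mem H (b₁ + b₂)) hsum

noncomputable def fquot (H : AddSubgroup (G₁ × G₂)) : Bsnd H →+ G₁ ⧸ Afst H :=
  AddMonoidHom.mk' (fquot0 H) (fquot0_add H)

lemma fquot_apply (H : AddSubgroup (G₁ × G₂)) (b : Bsnd H) :
    fquot H b = QuotientAddGroup.mk (s := Afst H) (wit H b) := rfl

lemma fquot_spec {H : AddSubgroup (G₁ × G₂)} {x : G₁} {y : G₂} (h : ((x, y) : G₁ × G₂) ∈ H)
    (hy : y ∈ Bsnd H) : fquot H ⟨y, hy⟩ = (x : G₁ ⧸ Afst H) := by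
  rw [fquot_apply]
  exact mk_eq_mk_of_mem (wit_mem H ⟨y, hy⟩) h

lemma mem_iff_fquot {H : AddSubgroup (G₁ × G₂)} {x : G₁} {y : G₂} (hy : y ∈ Bsnd H) :
    ((x, y) : G₁ × G₂) ∈ H ↔ (x : G₁ ⧸ Afst H) = fquot H ⟨y, hy⟩ := by
  constructor
  · intro h; exact (fquot_spec h hy).symm
  · intro h
    obtain ⟨x', hx'⟩ := mem_Bsnd.mp hy
    rw [fquot_spec hx' hy] at h
    rw [QuotientAddGroup.eq] at h
    rw [mem_Afst] at h
    have h3 := H.add_mem hx' (H.neg_mem h)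
    have heq : ((x', y) + -(-x + x', 0) : G₁ × G₂) = (x, y) := by
      rw [Prod.ext_iff]; simp
    rwa [heq] at h3

def mkSub (A : AddSubgroup G₁) (B : AddSubgroup G₂) (f : B →+ G₁ ⧸ A) :
    AddSubgroup (G₁ × G₂) where
  carrier := {p | ∃ h : p.2 ∈ B, QuotientAddGroup.mk (s := A) p.1 = f ⟨p.2, h⟩}
  zero_mem' := by
    refine ⟨B.zero_mem, ?_⟩
    have : (⟨(0 : G₁ × G₂).2, B.zero_mem⟩ : B) = 0 := rfl
    rw [this, map_zero]
    simp [QuotientAddGroup.mk_zero]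
  add_mem' := by
    rintro ⟨x₁, y₁⟩ ⟨x₂, y₂⟩ ⟨h₁, e₁⟩ ⟨h₂, e₂⟩
    refine ⟨B.add_mem h₁ h₂, ?_⟩
    simp only [Prod.fst_add, Prod.snd_add]
    have : (⟨y₁ + y₂, B.add_mem h₁ h₂⟩ : B) = ⟨y₁, h₁⟩ + ⟨y₂, h₂⟩ := rfl
    rw [this, map_add, ← e₁, ← e₂]
    rfl
  neg_mem' := by
    rintro ⟨x, y⟩ ⟨h, e⟩
    refine ⟨B.neg_mem h, ?_⟩
    simp only [Prod.fst_neg, Prod.snd_neg]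
    have : (⟨-y, B.neg_mem h⟩ : B) = -⟨y, h⟩ := rfl
    rw [this, map_neg, ← e]
    rfl

lemma mem_mkSub {A : AddSubgroup G₁} {B : AddSubgroup G₂} {f : B →+ G₁ ⧸ A} {x : G₁} {y : G₂} :
    ((x, y) : G₁ × G₂) ∈ mkSub A B f ↔
      ∃ h : y ∈ B, QuotientAddGroup.mk (s := A) x = f ⟨y, h⟩ := Iff.rfl

lemma recon (H : AddSubgroup (G₁ × G₂)) : mkSub (Afst H) (Bsnd H) (fquot H) = H := by
  ext ⟨x, y⟩
  rw [mem_mkSub]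
  constructor
  · rintro ⟨hy, hx⟩
    exact (mem_iff_fquot hy).mpr hx
  · intro h
    have hy : y ∈ Bsnd H := mem_Bsnd.mpr ⟨x, h⟩
    exact ⟨hy, (mem_iff_fquot hy).mp h⟩

lemma Afst_mkSub (A : AddSubgroup G₁) (B : AddSubgroup G₂) (f : B →+ G₁ ⧸ A) :
    Afst (mkSub A B f) = A := by
  ext x
  rw [mem_Afst, mem_mkSub]
  constructor
  · rintro ⟨h, e⟩
    have : (⟨(0 : G₂), h⟩ : B) = 0 := rfl
    rw [this, map_zero] at e
    rwa [QuotientAddGroup.eq_zero_iff] at e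
  · intro hx
    refine ⟨B.zero_mem, ?_⟩
    have : (⟨(0 : G₂), B.zero_mem⟩ : B) = 0 := rfl
    rw [this, map_zero]
    rwa [QuotientAddGroup.eq_zero_iff]

lemma Bsnd_mkSub (A : AddSubgroup G₁) (B : AddSubgroup G₂) (f : B →+ G₁ ⧸ A) :
    Bsnd (mkSub A B f) = B := by
  ext y
  rw [mem_Bsnd]
  constructor
  · rintro ⟨x, h, _⟩
    exact h
  · intro hy
    obtain ⟨x, hx⟩ := QuotientAddGroup.mk_surjective (f ⟨y, hy⟩)
    exact ⟨x, hy, hx⟩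

lemma sigma_eq {A A' : AddSubgroup G₁} {B B' : AddSubgroup G₂}
    {f : B →+ G₁ ⧸ A} {f' : B' →+ G₁ ⧸ A'} (hA : A = A') (hB : B = B')
    (hf : ∀ (x : G₁) (y : G₂) (h : y ∈ B) (h' : y ∈ B'),
      (QuotientAddGroup.mk (s := A) x = f ⟨y, h⟩ ↔ QuotientAddGroup.mk (s := A') x = f' ⟨y, h'⟩)) :
    (⟨A, ⟨B, f⟩⟩ : Σ A : AddSubgroup G₁, Σ B : AddSubgroup G₂, (B →+ G₁ ⧸ A)) = ⟨A', ⟨B', f'⟩⟩ := by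
  subst hA; subst hB
  have : f = f' := by
    ext b
    obtain ⟨y, hy⟩ := b
    obtain ⟨x, hx⟩ := QuotientAddGroup.mk_surjective (f ⟨y, hy⟩)
    rw [← hx]
    exact (hf x y hy hy).mp hx
  rw [this]

noncomputable def subgroupEquiv :
    AddSubgroup (G₁ × G₂) ≃ Σ A : AddSubgroup G₁, Σ B : AddSubgroup G₂, (B →+ G₁ ⧸ A) := by
  refine Equiv.ofBijective (fun H => ⟨Afst H, ⟨Bsnd H, fquot H⟩⟩) ⟨?_, ?_⟩
  · have : Function.LeftInverse (fun s : Σ A : AddSubgroup G₁, Σ B : AddSubgroup G₂,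
        (B →+ G₁ ⧸ A) => mkSub s.1 s.2.1 s.2.2) (fun H => ⟨Afst H, ⟨Bsnd H, fquot H⟩⟩) := recon
    exact this.injective
  · rintro ⟨A, B, f⟩
    refine ⟨mkSub A B f, ?_⟩
    refine sigma_eq (Afst_mkSub A B f) (Bsnd_mkSub A B f) ?_
    intro x y h h'
    rw [← mem_iff_fquot h, mem_mkSub]
    exact ⟨fun ⟨hh, e⟩ => e, fun e => ⟨h', e⟩⟩

theorem card_addSubgroup_prod :
    Nat.card (AddSubgroup (G₁ × G₂)) =
      Nat.card (Σ A : AddSubgroup G₁, Σ B : AddSubgroup G₂, (B →+ G₁ ⧸ A)) :=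
  Nat.card_congr subgroupEquiv


def Ker (n d : ℕ) : AddSubgroup (ZMod n) :=
  (AddMonoidHom.mulLeft ((d : ZMod n))).ker

lemma mem_Ker {n d : ℕ} {x : ZMod n} : x ∈ Ker n d ↔ (d : ZMod n) * x = 0 := Iff.rfl

lemma range_mulLeft (n d : ℕ) :
    (AddMonoidHom.mulLeft ((d : ZMod n))).range = AddSubgroup.zmultiples ((d : ZMod n)) := by
  ext x
  rw [AddMonoidHom.mem_range, AddSubgroup.mem_zmultiples_iff]
  constructor
  · rintro ⟨y, rfl⟩
    obtain ⟨k, rfl⟩ := ZMod.intCast_surjective y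
    exact ⟨k, by rw [zsmul_eq_mul, mul_comm]; rfl⟩
  · rintro ⟨k, rfl⟩
    exact ⟨(k : ZMod n), by rw [zsmul_eq_mul, mul_comm]; rfl⟩

lemma card_Ker {n : ℕ} (hn : n ≠ 0) (d : ℕ) : Nat.card (Ker n d) = Nat.gcd d n := by
  haveI : NeZero n := ⟨hn⟩
  set φ := AddMonoidHom.mulLeft ((d : ZMod n)) with hφ
  have hrange : Nat.card φ.range = n / n.gcd d := by
    rw [range_mulLeft, Nat.card_zmultiples, ZMod.addOrderOf_coe d hn]
  have hiso : Nat.card (ZMod n ⧸ φ.ker) = Nat.card φ.range :=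
    Nat.card_congr (QuotientAddGroup.quotientKerEquivRange φ).toEquiv
  have hlag : Nat.card (ZMod n) = Nat.card (ZMod n ⧸ φ.ker) * Nat.card φ.ker :=
    AddSubgroup.card_eq_card_quotient_mul_card_addSubgroup φ.ker
  rw [Nat.card_zmod, hiso, hrange] at hlag
  have hgdvd : n.gcd d ∣ n := Nat.gcd_dvd_left n d
  have hgpos : 0 < n.gcd d := Nat.gcd_pos_of_pos_left d (Nat.pos_of_ne_zero hn)
  have hqpos : 0 < n / n.gcd d := Nat.div_pos (Nat.le_of_dvd (Nat.pos_of_ne_zero hn) hgdvd) hgpos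
  have : n / n.gcd d * Nat.card φ.ker = n / n.gcd d * n.gcd d := by
    rw [← hlag, Nat.div_mul_cancel hgdvd]
  have := Nat.eq_of_mul_eq_mul_left hqpos this
  rw [Nat.gcd_comm]
  exact this

lemma subgroup_eq_Ker {n : ℕ} (hn : n ≠ 0) (H : AddSubgroup (ZMod n)) :
    H = Ker n (Nat.card H) := by
  haveI : NeZero n := ⟨hn⟩
  have hle : H ≤ Ker n (Nat.card H) := by
    intro x hx
    rw [mem_Ker]
    have h1 : addOrderOf (⟨x, hx⟩ : H) ∣ Nat.card H := addOrderOf_dvd_natCard _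
    have h2 : (Nat.card H) • (⟨x, hx⟩ : H) = 0 := addOrderOf_dvd_iff_nsmul_eq_zero.mp h1
    have h3 : (Nat.card H) • x = 0 := congrArg Subtype.val h2
    rw [← h3, nsmul_eq_mul]
  have hdvd : Nat.card H ∣ n := by
    have := AddSubgroup.card_addSubgroup_dvd_card H
    rwa [Nat.card_zmod] at this
  have hcard : Nat.card (Ker n (Nat.card H)) = Nat.card H := by
    rw [card_Ker hn, Nat.gcd_eq_left hdvd]
  exact AddSubgroup.eq_of_le_of_card_ge hle hcard.le

lemma sum_over_subgroups {n : ℕ} (hn : n ≠ 0) (g : ℕ → ℕ)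
    [Fintype (AddSubgroup (ZMod n))] :
    ∑ H : AddSubgroup (ZMod n), g (Nat.card H) = ∑ d ∈ n.divisors, g d := by
  haveI : NeZero n := ⟨hn⟩
  refine Finset.sum_bij' (fun H _ => Nat.card H) (fun d _ => Ker n d) ?_ ?_ ?_ ?_ ?_
  · intro H _
    rw [Nat.mem_divisors]
    refine ⟨?_, hn⟩
    have := AddSubgroup.card_addSubgroup_dvd_card H
    rwa [Nat.card_zmod] at this
  · intro d _
    exact Finset.mem_univ _
  · intro H _
    exact (subgroup_eq_Ker hn H).symm
  · intro d hd
    rw [Nat.mem_divisors] at hd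
    show Nat.card (Ker n d) = d
    rw [card_Ker hn, Nat.gcd_eq_left hd.1]
  · intro H _
    rfl

lemma card_hom_eq_gcd (M N : Type*) [AddCommGroup M] [AddCommGroup N] [Finite M] [Finite N]
    [IsAddCyclic M] [IsAddCyclic N] :
    Nat.card (M →+ N) = Nat.gcd (Nat.card M) (Nat.card N) := by
  have e₁ : ZMod (Nat.card M) ≃+ M := zmodAddCyclicAddEquiv inferInstance
  have e₂ : ZMod (Nat.card N) ≃+ N := zmodAddCyclicAddEquiv inferInstance
  set m := Nat.card M
  set n := Nat.card N
  have hn : n ≠ 0 := Nat.card_ne_zero.mpr ⟨inferInstance, inferInstance⟩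
  have E1 : (M →+ N) ≃ (ZMod m →+ ZMod n) := (AddEquiv.addMonoidHomCongrLeftEquiv e₁.symm).trans (AddEquiv.addMonoidHomCongrRightEquiv e₂.symm)
  have E2 : (ZMod m →+ ZMod n) ≃ { f : ℤ →+ ZMod n // f m = 0 } := (ZMod.lift m).symm
  have E3 : { f : ℤ →+ ZMod n // f (m : ℤ) = 0 } ≃ { x : ZMod n // (m : ℤ) • x = 0 } :=
    (Equiv.subtypeEquiv (zmultiplesHom (ZMod n)) (fun x => by
      rw [zmultiplesHom_apply])).symm
  have E4 : { x : ZMod n // (m : ℤ) • x = 0 } ≃ Ker n m :=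
    Equiv.subtypeEquivRight (fun x => by
      rw [natCast_zsmul, nsmul_eq_mul, mem_Ker])
  rw [Nat.card_congr (((E1.trans E2).trans E3).trans E4), card_Ker hn m]



end SubgroupCount


theorem number_of_subgroups_two (n₁ n₂ : ℕ) (h₁ : 0 < n₁) (h₂ : 0 < n₂) :
    Nat.card (AddSubgroup (ZMod n₁ × ZMod n₂)) =
      ∑ d₁ ∈ n₁.divisors, ∑ d₂ ∈ n₂.divisors, Nat.gcd d₁ d₂ := by
  haveI : NeZero n₁ := ⟨h₁.ne'⟩
  haveI : NeZero n₂ := ⟨h₂.ne'⟩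
  haveI F1 : Finite (AddSubgroup (ZMod n₁)) :=
    Finite.of_injective (fun H => (H : Set (ZMod n₁))) SetLike.coe_injective
  haveI F2 : Finite (AddSubgroup (ZMod n₂)) :=
    Finite.of_injective (fun H => (H : Set (ZMod n₂))) SetLike.coe_injective
  letI : Fintype (AddSubgroup (ZMod n₁)) := Fintype.ofFinite _
  letI : Fintype (AddSubgroup (ZMod n₂)) := Fintype.ofFinite _
  haveI hFin : ∀ (A : AddSubgroup (ZMod n₁)) (B : AddSubgroup (ZMod n₂)),
      Finite (B →+ ZMod n₁ ⧸ A) := fun A B => FunLike.finite _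
  letI : ∀ (A : AddSubgroup (ZMod n₁)) (B : AddSubgroup (ZMod n₂)),
      Fintype (B →+ ZMod n₁ ⧸ A) := fun A B => Fintype.ofFinite _
  haveI hCyc : ∀ (A : AddSubgroup (ZMod n₁)), IsAddCyclic (ZMod n₁ ⧸ A) := fun A =>
    isAddCyclic_of_surjective (QuotientAddGroup.mk' A) (QuotientAddGroup.mk'_surjective A)
  calc
    Nat.card (AddSubgroup (ZMod n₁ × ZMod n₂))
        = Nat.card (Σ A : AddSubgroup (ZMod n₁), Σ B : AddSubgroup (ZMod n₂),
            (B →+ ZMod n₁ ⧸ A)) := SubgroupCount.card_addSubgroup_prod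
    _ = ∑ A : AddSubgroup (ZMod n₁), ∑ B : AddSubgroup (ZMod n₂),
          Nat.card (B →+ ZMod n₁ ⧸ A) := by
        rw [Nat.card_eq_fintype_card, Fintype.card_sigma]
        refine Finset.sum_congr rfl fun A _ => ?_
        rw [Fintype.card_sigma]
        exact Finset.sum_congr rfl fun B _ => (Nat.card_eq_fintype_card).symm
    _ = ∑ A : AddSubgroup (ZMod n₁), ∑ B : AddSubgroup (ZMod n₂),
          Nat.gcd (Nat.card B) (n₁ / Nat.card A) := by
        refine Finset.sum_congr rfl fun A _ => Finset.sum_congr rfl fun B _ => ?_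
        rw [SubgroupCount.card_hom_eq_gcd]
        congr 1
        have hlag := AddSubgroup.card_eq_card_quotient_mul_card_addSubgroup A
        rw [Nat.card_zmod] at hlag
        have hApos : 0 < Nat.card A := Nat.card_pos
        exact (Nat.div_eq_of_eq_mul_left hApos hlag).symm
    _ = ∑ A : AddSubgroup (ZMod n₁), ∑ d₂ ∈ n₂.divisors, Nat.gcd d₂ (n₁ / Nat.card A) := by
        refine Finset.sum_congr rfl fun A _ => ?_
        exact SubgroupCount.sum_over_subgroups h₂.ne' (fun d => Nat.gcd d (n₁ / Nat.card A))
    _ = ∑ d₁ ∈ n₁.divisors, ∑ d₂ ∈ n₂.divisors, Nat.gcd d₂ (n₁ / d₁) :=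
        SubgroupCount.sum_over_subgroups h₁.ne'
          (fun d₁ => ∑ d₂ ∈ n₂.divisors, Nat.gcd d₂ (n₁ / d₁))
    _ = ∑ d₁ ∈ n₁.divisors, ∑ d₂ ∈ n₂.divisors, Nat.gcd d₂ d₁ :=
        Nat.sum_div_divisors n₁ (fun d₁ => ∑ d₂ ∈ n₂.divisors, Nat.gcd d₂ d₁)
    _ = ∑ d₁ ∈ n₁.divisors, ∑ d₂ ∈ n₂.divisors, Nat.gcd d₁ d₂ := by
        exact Finset.sum_congr rfl fun d₁ _ => Finset.sum_congr rfl fun d₂ _ => Nat.gcd_comm _ _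
end

section
/- Let r ≥ 1 and let n₁, …, n_r, m₁, …, m_r be positive integers with gcd(n₁⋯n_r, m₁⋯m_r) = 1. Then the sum of the orders of the elements of C_{n₁m₁} × ⋯ × C_{n_rm_r} equals the product of the sum of the orders of the elements of C_{n₁} × ⋯ × C_{n_r} and the sum of the orders of the elements of C_{m₁} × ⋯ × C_{m_r}; consequently the arithmetic mean A of element orders satisfies A(n₁m₁, …, n_rm_r) = A(n₁, …, n_r)·A(m₁, …, m_r). -/
open Finset

theorem sum_of_orders_multiplicative (r : ℕ) (hr : 1 ≤ r) (n m : Fin r → ℕ)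
    [∀ i, NeZero (n i)] [∀ i, NeZero (m i)]
    (hcop : Nat.gcd (∏ i, n i) (∏ i, m i) = 1) :
    (∑ x : ∀ i, ZMod (n i * m i), addOrderOf x) =
        (∑ x : ∀ i, ZMod (n i), addOrderOf x) *
          (∑ x : ∀ i, ZMod (m i), addOrderOf x) ∧
      ((∑ x : ∀ i, ZMod (n i * m i), addOrderOf x : ℚ) /
          Nat.card (∀ i, ZMod (n i * m i))) =
        ((∑ x : ∀ i, ZMod (n i), addOrderOf x : ℚ) / Nat.card (∀ i, ZMod (n i))) *
          ((∑ x : ∀ i, ZMod (m i), addOrderOf x : ℚ) / Nat.card (∀ i, ZMod (m i))) := by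
  have hcopi : ∀ i, Nat.Coprime (n i) (m i) := fun i =>
    Nat.Coprime.coprime_dvd_left (Finset.dvd_prod_of_mem n (mem_univ i))
      (Nat.Coprime.coprime_dvd_right (Finset.dvd_prod_of_mem m (mem_univ i)) hcop)
  -- CRT equiv per coordinate
  let e1 : (∀ i, ZMod (n i * m i)) ≃+ (∀ i, ZMod (n i) × ZMod (m i)) :=
    AddEquiv.piCongrRight fun i => (ZMod.chineseRemainder (hcopi i)).toAddEquiv
  let e2 : (∀ i, ZMod (n i) × ZMod (m i)) ≃+ (∀ i, ZMod (n i)) × (∀ i, ZMod (m i)) :=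
    { toFun := fun f => (fun i => (f i).1, fun i => (f i).2)
      invFun := fun p i => (p.1 i, p.2 i)
      left_inv := fun f => rfl
      right_inv := fun p => rfl
      map_add' := fun f g => rfl }
  let e : (∀ i, ZMod (n i * m i)) ≃+ (∀ i, ZMod (n i)) × (∀ i, ZMod (m i)) := e1.trans e2
  have key : (∑ x : ∀ i, ZMod (n i * m i), addOrderOf x) =
      (∑ x : ∀ i, ZMod (n i), addOrderOf x) * (∑ x : ∀ i, ZMod (m i), addOrderOf x) := by
    have h1 : (∑ x : ∀ i, ZMod (n i * m i), addOrderOf x) =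
        ∑ p : (∀ i, ZMod (n i)) × (∀ i, ZMod (m i)), addOrderOf p := by
      rw [← Equiv.sum_comp e.toEquiv]
      exact Finset.sum_congr rfl fun x _ => (AddEquiv.addOrderOf_eq e x).symm
    rw [h1, Finset.sum_mul_sum, Fintype.sum_prod_type]
    refine Finset.sum_congr rfl fun a _ => Finset.sum_congr rfl fun b _ => ?_
    rw [Prod.addOrderOf]
    have ha : addOrderOf a ∣ ∏ i, n i := by
      have := addOrderOf_dvd_card (x := a)
      simpa [Fintype.card_pi, ZMod.card] using this
    have hb : addOrderOf b ∣ ∏ i, m i := by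
      have := addOrderOf_dvd_card (x := b)
      simpa [Fintype.card_pi, ZMod.card] using this
    have hc : Nat.Coprime (addOrderOf a) (addOrderOf b) :=
      Nat.Coprime.coprime_dvd_left ha (Nat.Coprime.coprime_dvd_right hb hcop)
    exact hc.lcm_eq_mul
  refine ⟨key, ?_⟩
  have cardn : (Nat.card (∀ i, ZMod (n i)) : ℚ) = ∏ i, (n i : ℚ) := by
    simp [Nat.card_pi, Nat.card_zmod]
  have cardm : (Nat.card (∀ i, ZMod (m i)) : ℚ) = ∏ i, (m i : ℚ) := by
    simp [Nat.card_pi, Nat.card_zmod]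
  have cardnm : (Nat.card (∀ i, ZMod (n i * m i)) : ℚ) = (∏ i, (n i : ℚ)) * ∏ i, (m i : ℚ) := by
    simp [Nat.card_pi, Nat.card_zmod, Finset.prod_mul_distrib]
  have hn0 : (∏ i, (n i : ℚ)) ≠ 0 :=
    Finset.prod_ne_zero_iff.mpr fun i _ => Nat.cast_ne_zero.mpr (NeZero.ne (n i))
  have hm0 : (∏ i, (m i : ℚ)) ≠ 0 :=
    Finset.prod_ne_zero_iff.mpr fun i _ => Nat.cast_ne_zero.mpr (NeZero.ne (m i))
  have key' : (∑ x : ∀ i, ZMod (n i * m i), (addOrderOf x : ℚ)) =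
      (∑ x : ∀ i, ZMod (n i), (addOrderOf x : ℚ)) *
        (∑ x : ∀ i, ZMod (m i), (addOrderOf x : ℚ)) := by exact_mod_cast key
  rw [cardn, cardm, cardnm, key']
  field_simp
end
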